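/- arXiv:1109.4073 — 2 statements merged into one kernel-verified Lean document; each statement's English description precedes it below -/
import Mathlib

section
/- Let B = 𝒰_m ⊕ ⋯ ⊕ 𝒰_m (n copies of the UHF algebra of type m^∞), and let β : B → B be given by β(x₁,…,x_n) = (P₁ ⊗ x₂, P₂ ⊗ x₃, …, P_n ⊗ x₁) where each P_i ∈ M_m is a rank-one projection. Then the induced map β* on K₀(B) ≅ ℤ[1/m]^n is given by β*(x₁,…,x_n) = (x₂/m, …, x_n/m, x₁/m), and the cokernel of 1 − β* on ℤ[1/m]^n is isomorphic to ℤ/(m^n − 1)ℤ, while 1 − β* is injective. -/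
open Fin.NatCast

section ShiftCokerHom

private lemma sc_pow_eq_one (m n : ℕ) (hm : 1 < m) (hn : n ≠ 0) :
    ((m : ZMod (m ^ n - 1))) ^ n = 1 := by
  have h1 : m ^ n = (m ^ n - 1) + 1 :=
    (Nat.sub_add_cancel (Nat.one_le_pow _ _ (by omega))).symm
  have h2 : ((m : ZMod (m ^ n - 1))) ^ n = ((m ^ n : ℕ) : ZMod (m ^ n - 1)) := by push_cast; ring
  rw [h2, h1]
  push_cast [ZMod.natCast_self]
  ring

private lemma sc_isUnit_int (m n : ℕ) (hm : 1 < m) (hn : n ≠ 0) :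
    IsUnit ((Int.castRingHom (ZMod (m ^ n - 1))) ((m : ℕ) : ℤ)) := by
  refine IsUnit.of_mul_eq_one (((m : ℕ) : ZMod (m ^ n - 1)) ^ (n - 1)) ?_
  simp only [eq_intCast, Int.cast_natCast]
  rw [← pow_succ', show n - 1 + 1 = n by omega]
  exact sc_pow_eq_one m n hm hn

private noncomputable def scPi (m n : ℕ) (hm : 1 < m) (hn : n ≠ 0) :
    Localization.Away ((m : ℕ) : ℤ) →+* ZMod (m ^ n - 1) :=
  IsLocalization.Away.lift ((m : ℕ) : ℤ) (sc_isUnit_int m n hm hn)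

private lemma scPi_int (m n : ℕ) (hm : 1 < m) (hn : n ≠ 0) (k : ℤ) :
    scPi m n hm hn ((k : ℤ) : Localization.Away ((m : ℕ) : ℤ)) = (k : ZMod (m ^ n - 1)) := by
  have h := IsLocalization.Away.lift_eq (S := Localization.Away ((m : ℕ) : ℤ))
    ((m : ℕ) : ℤ) (sc_isUnit_int m n hm hn) k
  simpa [scPi, eq_intCast] using h

private lemma scPi_nat (m n : ℕ) (hm : 1 < m) (hn : n ≠ 0) :
    scPi m n hm hn ((m : ℕ) : Localization.Away ((m : ℕ) : ℤ)) = ((m : ℕ) : ZMod (m ^ n - 1)) := by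
  have h := scPi_int m n hm hn ((m : ℕ) : ℤ)
  simpa using h

private noncomputable def scF (m n : ℕ) (hm : 1 < m) (hn : n ≠ 0) :
    (Fin n → Localization.Away (m : ℤ)) →ₗ[ℤ] ZMod (m ^ n - 1) where
  toFun x := ∑ i : Fin n, ((m : ZMod (m ^ n - 1)) ^ (n - 1 - i.val) * scPi m n hm hn (x i))
  map_add' x y := by simp [mul_add, Finset.sum_add_distrib]
  map_smul' z x := by
    simp only [Pi.smul_apply, map_zsmul, RingHom.id_apply, Finset.smul_sum, mul_smul_comm]

private lemma scF_apply (m n : ℕ) (hm : 1 < m) (hn : n ≠ 0)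
    (x : Fin n → Localization.Away (m : ℤ)) :
    scF m n hm hn x = ∑ i : Fin n, ((m : ZMod (m ^ n - 1)) ^ (n - 1 - i.val) * scPi m n hm hn (x i)) :=
  rfl

private lemma scF_single (m n : ℕ) (hm : 1 < m) (hn : n ≠ 0) (i : Fin n)
    (a : Localization.Away (m : ℤ)) :
    scF m n hm hn (Pi.single i a) =
      (m : ZMod (m ^ n - 1)) ^ (n - 1 - (i : ℕ)) * scPi m n hm hn a := by
  rw [scF_apply, Finset.sum_eq_single i]
  · rw [Pi.single_eq_same]
  · intro j _ hj; rw [Pi.single_eq_of_ne hj, map_zero, mul_zero]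
  · intro h; exact absurd (Finset.mem_univ i) h

private lemma sc_c_succ (m n : ℕ) (hm : 1 < m) [NeZero n] (i : Fin n) :
    (m : ZMod (m ^ n - 1)) ^ (n - 1 - (i : ℕ)) =
      (m : ZMod (m ^ n - 1)) * (m : ZMod (m ^ n - 1)) ^ (n - 1 - ((i + 1 : Fin n) : ℕ)) := by
  obtain ⟨p, rfl⟩ : ∃ p, n = p + 1 :=
    ⟨n - 1, (Nat.succ_pred_eq_of_pos (Nat.pos_of_ne_zero (NeZero.ne n))).symm⟩
  rcases eq_or_ne i (Fin.last p) with h | h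
  · subst h
    rw [Fin.last_add_one]
    have e1 : p + 1 - 1 - ((Fin.last p : Fin (p + 1)) : ℕ) = 0 := by rw [Fin.val_last]; omega
    have e2 : p + 1 - 1 - ((0 : Fin (p + 1)) : ℕ) = p := by rw [Fin.val_zero]; omega
    rw [e1, e2, pow_zero, ← pow_succ']
    exact (sc_pow_eq_one m (p + 1) hm (by omega)).symm
  · have hv : ((i + 1 : Fin (p + 1)) : ℕ) = (i : ℕ) + 1 := by
      rw [Fin.val_add_one, if_neg h]
    have hi : (i : ℕ) < p := Fin.val_lt_last h
    have e3 : p + 1 - 1 - (i : ℕ) = (p + 1 - 1 - ((i : ℕ) + 1)) + 1 := by omega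
    rw [hv, e3]
    ring

end ShiftCokerHom

section ShiftCokerAux

variable {m n : ℕ} [NeZero n]

private lemma sc_m_unit : IsUnit ((m : ℕ) : Localization.Away ((m : ℕ) : ℤ)) := by
  have h := IsLocalization.Away.algebraMap_isUnit
    (S := Localization.Away ((m : ℕ) : ℤ)) ((m : ℕ) : ℤ)
  simpa [eq_intCast] using h

private lemma sc_cancel {a b : Localization.Away ((m : ℕ) : ℤ)}
    (h : ((m : ℕ) : Localization.Away ((m : ℕ) : ℤ)) * a =
      ((m : ℕ) : Localization.Away ((m : ℕ) : ℤ)) * b) :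
    a = b :=
  IsUnit.mul_left_cancel sc_m_unit h

variable (T : (Fin n → Localization.Away (m : ℤ)) →ₗ[ℤ] (Fin n → Localization.Away (m : ℤ)))
variable (hT : ∀ (x : Fin n → Localization.Away (m : ℤ)) (i : Fin n),
      (m : Localization.Away (m : ℤ)) * T x i = x (i + 1))

include hT

private lemma sc_rel1 (a : Localization.Away (m : ℤ)) (i : Fin n) :
    Pi.single (i + 1) ((m : Localization.Away (m : ℤ)) * a) - Pi.single i a ∈
      LinearMap.range (LinearMap.id - T) := by
  refine ⟨Pi.single (i + 1) ((m : Localization.Away (m : ℤ)) * a), ?_⟩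
  funext j
  have key : T (Pi.single (i + 1) ((m : Localization.Away (m : ℤ)) * a)) j =
      Pi.single (M := fun _ : Fin n => Localization.Away (m : ℤ)) i a j := by
    apply sc_cancel
    rw [hT]
    by_cases h : j = i
    · subst h; rw [Pi.single_eq_same, Pi.single_eq_same]
    · rw [Pi.single_eq_of_ne (fun hji => h (add_right_cancel hji)),
        Pi.single_eq_of_ne h, mul_zero]
  simp only [LinearMap.sub_apply, LinearMap.id_apply, Pi.sub_apply, key]

private lemma sc_rel2 (k : ℕ) (a : Localization.Away (m : ℤ)) (i : Fin n) :
    Pi.single (i + (k : Fin n)) ((m : Localization.Away (m : ℤ)) ^ k * a) - Pi.single i a ∈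
      LinearMap.range (LinearMap.id - T) := by
  induction k generalizing a i with
  | zero => simp
  | succ k ih =>
    have hcast : ((k + 1 : ℕ) : Fin n) = (k : Fin n) + 1 := by push_cast; ring
    have h1 := sc_rel1 T hT (((m : Localization.Away (m : ℤ))) ^ k * a) (i + (k : Fin n))
    rw [show (m : Localization.Away (m : ℤ)) * ((m : Localization.Away (m : ℤ)) ^ k * a) =
      (m : Localization.Away (m : ℤ)) ^ (k + 1) * a by ring] at h1
    have h3 := add_mem h1 (ih a i)
    rw [sub_add_sub_cancel] at h3
    rw [hcast, ← add_assoc]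
    exact h3

private lemma sc_reduce_single (iL : Fin n) (a : Localization.Away (m : ℤ)) (i : Fin n) :
    ∃ c : ℤ, Pi.single i a - Pi.single iL ((c : ℤ) : Localization.Away (m : ℤ)) ∈
      LinearMap.range (LinearMap.id (R := ℤ) (M := Fin n → Localization.Away (m : ℤ)) - T) := by
  obtain ⟨⟨b, s⟩, hbs⟩ := IsLocalization.surj (Submonoid.powers ((m : ℕ) : ℤ)) a
  obtain ⟨K, hK⟩ := s.2
  simp only [eq_intCast] at hbs
  have ha : ((m : ℕ) : Localization.Away (m : ℤ)) ^ K * a =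
      ((b : ℤ) : Localization.Away (m : ℤ)) := by
    rw [← hbs, ← hK]; push_cast; ring
  have h1 := sc_rel2 T hT K a i
  rw [ha] at h1
  set j := i + (K : Fin n) with hj
  set t := (iL - j).val with ht
  have hjt : j + (t : Fin n) = iL := by
    rw [ht, Fin.cast_val_eq_self, add_comm]
    exact sub_add_cancel iL j
  have h2 := sc_rel2 T hT t ((b : ℤ) : Localization.Away (m : ℤ)) j
  rw [hjt] at h2
  refine ⟨(m : ℤ) ^ t * b, ?_⟩
  have h3 := add_mem h2 h1
  rw [sub_add_sub_cancel] at h3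
  have hcast2 : ((m : Localization.Away (m : ℤ))) ^ t * ((b : ℤ) : Localization.Away (m : ℤ)) =
      (((m : ℤ) ^ t * b : ℤ) : Localization.Away (m : ℤ)) := by push_cast; ring
  rw [hcast2] at h3
  rw [← neg_sub (b := (Pi.single i a : Fin n → Localization.Away (m : ℤ)))]
  exact neg_mem h3

private lemma sc_reduce (iL : Fin n) (x : Fin n → Localization.Away (m : ℤ)) :
    ∃ c : ℤ, x - Pi.single iL ((c : ℤ) : Localization.Away (m : ℤ)) ∈
      LinearMap.range (LinearMap.id (R := ℤ) (M := Fin n → Localization.Away (m : ℤ)) - T) := by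
  choose c hc using fun i => sc_reduce_single T hT iL (x i) i
  refine ⟨∑ i, c i, ?_⟩
  have h := Submodule.sum_mem (LinearMap.range (LinearMap.id - T))
    (fun i (_ : i ∈ Finset.univ) => hc i)
  have heq : ∑ i, (Pi.single i (x i) -
      Pi.single iL ((c i : ℤ) : Localization.Away (m : ℤ))) =
      x - Pi.single iL (((∑ i, c i : ℤ)) : Localization.Away (m : ℤ)) := by
    rw [Finset.sum_sub_distrib, Finset.univ_sum_single]
    congr 1
    push_cast
    exact (map_sum (LinearMap.single ℤ (fun _ => Localization.Away (m : ℤ)) iL) _ _).symm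
  rwa [heq] at h

private lemma scF_T (hm : 1 < m) (x : Fin n → Localization.Away (m : ℤ)) :
    scF m n hm (NeZero.ne n) (T x) = scF m n hm (NeZero.ne n) x := by
  have key : ∀ i : Fin n,
      (m : ZMod (m ^ n - 1)) ^ (n - 1 - (i : ℕ)) * scPi m n hm (NeZero.ne n) (T x i) =
      (m : ZMod (m ^ n - 1)) ^ (n - 1 - ((i + 1 : Fin n) : ℕ)) *
        scPi m n hm (NeZero.ne n) (x (i + 1)) := by
    intro i
    have h1 : (m : ZMod (m ^ n - 1)) * scPi m n hm (NeZero.ne n) (T x i) =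
        scPi m n hm (NeZero.ne n) (x (i + 1)) := by
      rw [← hT x i, map_mul, scPi_nat]
    rw [sc_c_succ m n hm i, mul_assoc, mul_left_comm, h1]
  rw [scF_apply, scF_apply]
  calc ∑ i : Fin n, (m : ZMod (m ^ n - 1)) ^ (n - 1 - (i : ℕ)) *
        scPi m n hm (NeZero.ne n) (T x i)
      = ∑ i : Fin n, (m : ZMod (m ^ n - 1)) ^ (n - 1 - ((i + 1 : Fin n) : ℕ)) *
        scPi m n hm (NeZero.ne n) (x (i + 1)) := Finset.sum_congr rfl fun i _ => key i
    _ = ∑ i : Fin n, (m : ZMod (m ^ n - 1)) ^ (n - 1 - (i : ℕ)) *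
        scPi m n hm (NeZero.ne n) (x i) :=
        Fintype.sum_equiv (Equiv.addRight 1) _ _ (fun i => rfl)

end ShiftCokerAux

/-- Let `R = ℤ[1/m]` and let `T : Rⁿ → Rⁿ` be the ℤ-linear map with
`T(x₁,…,xₙ) = (x₂/m, …, xₙ/m, x₁/m)` (characterized by `m · (T x) i = x (i+1)` cyclically).
Then `1 - T` is injective and its cokernel is isomorphic to `ℤ/(mⁿ - 1)ℤ`. -/
theorem shift_div_m_coker (m n : ℕ) (hm : 1 < m) [NeZero n]
    (T : (Fin n → Localization.Away (m : ℤ)) →ₗ[ℤ] (Fin n → Localization.Away (m : ℤ)))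
    (hT : ∀ (x : Fin n → Localization.Away (m : ℤ)) (i : Fin n),
      (m : Localization.Away (m : ℤ)) * T x i = x (i + 1)) :
    Function.Injective ⇑((LinearMap.id :
        (Fin n → Localization.Away (m : ℤ)) →ₗ[ℤ] (Fin n → Localization.Away (m : ℤ))) - T) ∧
      Nonempty (((Fin n → Localization.Away (m : ℤ)) ⧸
          LinearMap.range ((LinearMap.id :
            (Fin n → Localization.Away (m : ℤ)) →ₗ[ℤ]
              (Fin n → Localization.Away (m : ℤ))) - T)) ≃+ ZMod (m ^ n - 1)) := by
  obtain ⟨p, rfl⟩ : ∃ p, n = p + 1 :=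
    ⟨n - 1, (Nat.succ_pred_eq_of_pos (Nat.pos_of_ne_zero (NeZero.ne n))).symm⟩
  have hle : Submonoid.powers ((m : ℕ) : ℤ) ≤ nonZeroDivisors ℤ := by
    rintro z ⟨k, rfl⟩
    exact mem_nonZeroDivisors_of_ne_zero
      (pow_ne_zero _ (by exact_mod_cast (by omega : m ≠ 0)))
  constructor
  · -- injectivity
    rw [injective_iff_map_eq_zero]
    intro x hx
    have hTx : T x = x := by
      rw [LinearMap.sub_apply, LinearMap.id_apply, sub_eq_zero] at hx
      exact hx.symm
    have hxT : ∀ i, x (i + 1) = (m : Localization.Away (m : ℤ)) * x i := fun i => by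
      rw [← hT x i, hTx]
    have hpow : ∀ (k : ℕ) (i : Fin (p + 1)),
        x (i + (k : Fin (p + 1))) = (m : Localization.Away (m : ℤ)) ^ k * x i := by
      intro k
      induction k with
      | zero => intro i; simp
      | succ k ih =>
        intro i
        have hcast : ((k + 1 : ℕ) : Fin (p + 1)) = (k : Fin (p + 1)) + 1 := by push_cast; ring
        rw [hcast, ← add_assoc, hxT (i + (k : Fin (p + 1))), ih i, ← mul_assoc, ← pow_succ']
    have hfix : ∀ i, ((m : Localization.Away (m : ℤ)) ^ (p + 1) - 1) * x i = 0 := by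
      intro i
      have h := hpow (p + 1) i
      rw [Fin.natCast_self, add_zero] at h
      rw [sub_mul, one_mul, sub_eq_zero]
      exact h.symm
    haveI : IsDomain (Localization.Away ((m : ℕ) : ℤ)) :=
      IsLocalization.isDomain_localization hle
    have hne : ((m : Localization.Away (m : ℤ)) ^ (p + 1) - 1) ≠ 0 := by
      have hinj := IsLocalization.injective (Localization.Away ((m : ℕ) : ℤ)) hle
      intro h0
      have hcast : (((m : ℤ) ^ (p + 1) - 1 : ℤ) : Localization.Away (m : ℤ)) =
          ((0 : ℤ) : Localization.Away (m : ℤ)) := by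
        push_cast
        exact h0
      have h2 : ((m : ℤ) ^ (p + 1) - 1 : ℤ) = 0 := hinj (by simpa [eq_intCast] using hcast)
      have hn2 : 1 < m ^ (p + 1) := Nat.one_lt_pow (by omega) hm
      have : (1 : ℤ) < ((m : ℕ) : ℤ) ^ (p + 1) := by exact_mod_cast hn2
      omega
    funext i
    rcases mul_eq_zero.mp (hfix i) with h | h
    · exact absurd h hne
    · simpa using h
  · -- cokernel
    have hn : p + 1 ≠ 0 := by omega
    have hker : LinearMap.range (LinearMap.id - T) ≤ LinearMap.ker (scF m (p + 1) hm hn) := by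
      rintro y ⟨x, rfl⟩
      rw [LinearMap.mem_ker, LinearMap.sub_apply, LinearMap.id_apply, map_sub]
      rw [show scF m (p + 1) hm hn (T x) = scF m (p + 1) hm hn x from scF_T T hT hm x]
      exact sub_self _
    have hNcast : ((m ^ (p + 1) - 1 : ℕ) : ℤ) = ((m : ℕ) : ℤ) ^ (p + 1) - 1 := by
      have h1 : 1 ≤ m ^ (p + 1) := Nat.one_le_pow _ _ (by omega)
      push_cast [h1]
      ring
    -- the distinguished generator
    have hkeL : ∀ k : ℤ, k • (Pi.single (Fin.last p)
        ((1 : ℤ) : Localization.Away (m : ℤ)) : Fin (p + 1) → Localization.Away (m : ℤ)) =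
        Pi.single (Fin.last p) ((k : ℤ) : Localization.Away (m : ℤ)) := by
      intro k
      funext j
      by_cases hj : j = Fin.last p
      · subst hj
        rw [Pi.smul_apply, Pi.single_eq_same, Pi.single_eq_same, zsmul_eq_mul]
        push_cast
        ring
      · simp [Pi.single_eq_of_ne hj]
    -- N • eL lies in the range
    have hNmem : ((m ^ (p + 1) - 1 : ℕ) : ℤ) • (Pi.single (Fin.last p)
        ((1 : ℤ) : Localization.Away (m : ℤ)) : Fin (p + 1) → Localization.Away (m : ℤ)) ∈
        LinearMap.range (LinearMap.id - T) := by
      refine ⟨fun i => (((m : ℤ) ^ (i.val + 1) : ℤ) : Localization.Away (m : ℤ)), ?_⟩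
      rw [hkeL]
      funext i
      apply sc_cancel (m := m)
      rw [LinearMap.sub_apply, LinearMap.id_apply, Pi.sub_apply, mul_sub, hT]
      by_cases h : i = Fin.last p
      · subst h
        rw [Fin.last_add_one, Pi.single_eq_same, Fin.val_last, Fin.val_zero, hNcast]
        push_cast
        ring
      · have hv : ((i + 1 : Fin (p + 1)) : ℕ) = i.val + 1 := by
          rw [Fin.val_add_one, if_neg h]
        rw [Pi.single_eq_of_ne h, hv, mul_zero]
        push_cast
        ring
    refine Nonempty.intro ?_
    set Q := ((Fin (p + 1) → Localization.Away (m : ℤ)) ⧸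
        LinearMap.range (LinearMap.id - T)) with hQ
    have hg := Submodule.liftQ (LinearMap.range (LinearMap.id - T)) (scF m (p + 1) hm hn) hker
    set g := Submodule.liftQ (LinearMap.range (LinearMap.id - T)) (scF m (p + 1) hm hn) hker
      with hgdef
    have hgmk : ∀ x, g (Submodule.Quotient.mk x) = scF m (p + 1) hm hn x := fun x => rfl
    set q1 : Q := Submodule.Quotient.mk (Pi.single (Fin.last p)
        ((1 : ℤ) : Localization.Away (m : ℤ))) with hq1
    have hh0 : (zmultiplesHom Q q1) ((m ^ (p + 1) - 1 : ℕ) : ℤ) = 0 := by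
      rw [zmultiplesHom_apply, hq1, ← Submodule.Quotient.mk_smul, Submodule.Quotient.mk_eq_zero]
      exact hNmem
    set h := ZMod.lift (m ^ (p + 1) - 1) ⟨zmultiplesHom Q q1, hh0⟩ with hhdef
    have hgq1 : g q1 = 1 := by
      rw [hq1, hgmk, scF_single, scPi_int, Int.cast_one, Fin.val_last, mul_one]
      rw [show p + 1 - 1 - p = 0 by omega, pow_zero]
    have hgsmul : ∀ k : ℤ, g (k • q1) = (k : ZMod (m ^ (p + 1) - 1)) := by
      intro k
      rw [map_zsmul, hgq1, zsmul_one]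
    have hright : ∀ z : ZMod (m ^ (p + 1) - 1), g (h z) = z := by
      intro z
      obtain ⟨k, rfl⟩ := ZMod.intCast_surjective z
      rw [hhdef, ZMod.lift_coe, zmultiplesHom_apply, hgsmul]
    have hleft : ∀ q : Q, h (g q) = q := by
      intro q
      obtain ⟨x, rfl⟩ := Submodule.Quotient.mk_surjective _ q
      obtain ⟨k, hk⟩ := sc_reduce T hT (Fin.last p) x
      have hmk : (Submodule.Quotient.mk x : Q) = k • q1 := by
        rw [hq1, ← Submodule.Quotient.mk_smul]
        rw [show k • (Pi.single (Fin.last p) ((1 : ℤ) : Localization.Away (m : ℤ)) :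
          Fin (p + 1) → Localization.Away (m : ℤ)) =
          Pi.single (Fin.last p) ((k : ℤ) : Localization.Away (m : ℤ)) from hkeL k]
        exact (Submodule.Quotient.eq _).mpr hk
      rw [hmk, hgsmul, hhdef, ZMod.lift_coe, zmultiplesHom_apply]
    exact { toFun := g, invFun := h, left_inv := hleft, right_inv := hright,
            map_add' := map_add g }
end

section
/- Let A be a unital C*-algebra with the Riesz decomposition property for Murray–von Neumann equivalence classes of projections, and let q, p' be projections in A with p' ≲ 1. If p' ≾ q ⊕ (1 − q) in the sense that p' ∼ a ⊕ b with a ≲ q and b ≲ 1 − q, then there is a partial isometry v ∈ A with v*v ≤ p' and vv* ≤ 1 − q such that p' lies in the closed two-sided ideal generated by q + vv*. -/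
variable {A : Type*} [CStarAlgebra A] [PartialOrder A] [StarOrderedRing A]

/-- `p` is a projection. -/
def IsProjection (p : A) : Prop := IsSelfAdjoint p ∧ IsIdempotentElem p

/-- Murray–von Neumann subequivalence of projections: `p ≲ q`. -/
def MvNLE (p q : A) : Prop := ∃ v : A, star v * v = p ∧ v * star v ≤ q

/-- The closed linear span of a set. -/
noncomputable def clspan (s : Set A) : Set A := closure (Submodule.span ℂ s : Set A)

section Aux

/-- A projection is nonnegative. -/
lemma aux_proj_nonneg {p : A} (h : IsProjection p) : 0 ≤ p := by
  have h1 : p = star p * p := by rw [h.1.star_eq]; exact h.2.eq.symm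
  rw [h1]; exact star_mul_self_nonneg p

/-- The complement of a projection is a projection. -/
lemma aux_proj_compl {p : A} (h : IsProjection p) : IsProjection (1 - p) :=
  ⟨(IsSelfAdjoint.one A).sub h.1, h.2.one_sub⟩

/-- A projection is `≤ 1`. -/
lemma aux_proj_le_one {p : A} (h : IsProjection p) : p ≤ 1 := by
  have := aux_proj_nonneg (aux_proj_compl h)
  simpa [sub_nonneg] using this

/-- If `star u * u` is idempotent (hence a projection) then `u * (star u * u) = u`. -/
lemma aux_ptiso {u : A} (h : IsIdempotentElem (star u * u)) :
    u * (star u * u) = u := by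
  have hs : star (star u * u) = star u * u := (IsSelfAdjoint.star_mul_self u).star_eq
  rw [← sub_eq_zero, ← CStarRing.star_mul_self_eq_zero_iff]
  have hexp : star (u * (star u * u) - u) * (u * (star u * u) - u)
      = (star u * u) * (star u * u) * (star u * u)
        - (star u * u) * (star u * u) - (star u * u) * (star u * u)
        + star u * u := by
    simp only [star_sub, star_mul, star_star, hs]
    noncomm_ring
  rw [hexp, h.eq, h.eq]
  abel

/-- If `e ≤ f` for projections `e`, `f` then `f * e = e`. -/
lemma aux_le_proj {e f : A} (he : IsProjection e) (hf : IsProjection f) (h : e ≤ f) :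
    f * e = e := by
  have hefe : e * f * e = e := by
    apply le_antisymm
    · have h1 := star_left_conjugate_le_conjugate (aux_proj_le_one hf) e
      simpa [he.1.star_eq, he.2.eq] using h1
    · have h2 := star_left_conjugate_le_conjugate h e
      have hee : e * e * e = e := by rw [he.2.eq, he.2.eq]
      simpa [he.1.star_eq, hee] using h2
  rw [← sub_eq_zero, ← CStarRing.star_mul_self_eq_zero_iff]
  have hexp : star (f * e - e) * (f * e - e)
      = e * f * f * e - e * f * e - e * f * e + e * e := by
    simp only [star_sub, star_mul, he.1.star_eq, hf.1.star_eq]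
    noncomm_ring
  have hff : e * f * f * e = e := by
    rw [mul_assoc e f f, hf.2.eq]; exact hefe
  rw [hexp, hff, hefe, he.2.eq]
  abel

lemma aux_le_proj' {e f : A} (he : IsProjection e) (hf : IsProjection f) (h : e ≤ f) :
    e * f = e := by
  have := congrArg star (aux_le_proj he hf h)
  simpa [star_mul, he.1.star_eq, hf.1.star_eq] using this

end Aux

/-- Let `A` be a unital C*-algebra whose projection monoid has the Riesz decomposition
property, and let `q, p'` be projections with `p' ≲ 1`.  If `p' ∼ a ⊕ b` with `a ≲ q` and
`b ≲ 1 − q`, then there is a partial isometry `v` with `v*v ≤ p'`, `vv* ≤ 1 − q`, and `p'`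
in the closed two-sided ideal generated by `q + vv*`. -/
theorem riesz_step_full_projection
    (hRiesz : ∀ p q₁ q₂ : A, IsProjection p → IsProjection q₁ → IsProjection q₂ →
      q₁ * q₂ = 0 → MvNLE p (q₁ + q₂) →
      ∃ p₁ p₂ : A, IsProjection p₁ ∧ IsProjection p₂ ∧ p₁ * p₂ = 0 ∧
        (∃ w : A, star w * w = p ∧ w * star w = p₁ + p₂) ∧ MvNLE p₁ q₁ ∧ MvNLE p₂ q₂)
    (q p' : A) (hq : IsProjection q) (hp' : IsProjection p')
    (hp'1 : MvNLE p' 1)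
    (hdec : ∃ a b : A, IsProjection a ∧ IsProjection b ∧ a * b = 0 ∧
      (∃ w : A, star w * w = p' ∧ w * star w = a + b) ∧ MvNLE a q ∧ MvNLE b (1 - q)) :
    ∃ v : A, star v * v ≤ p' ∧ v * star v ≤ 1 - q ∧
      p' ∈ clspan {z : A | ∃ x y : A, z = x * (q + v * star v) * y} := by
  obtain ⟨a, b, ha, hb, hab, ⟨w, hw1, hw2⟩, ⟨u, hu1, hu2⟩, ⟨v₀, hv1, hv2⟩⟩ := hdec
  -- partial isometry identities
  have hub : u * a = u := by
    have h0 : IsIdempotentElem (star u * u) := by rw [hu1]; exact ha.2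
    have := aux_ptiso h0
    rwa [hu1] at this
  have hvb : v₀ * b = v₀ := by
    have h0 : IsIdempotentElem (star v₀ * v₀) := by rw [hv1]; exact hb.2
    have := aux_ptiso h0
    rwa [hv1] at this
  -- `f := u * star u` and `e := v₀ * star v₀` are projections
  have hfproj : IsProjection (u * star u) := by
    refine ⟨IsSelfAdjoint.mul_star_self u, ?_⟩
    show (u * star u) * (u * star u) = u * star u
    calc (u * star u) * (u * star u) = u * (star u * u) * star u := by noncomm_ring
    _ = u * a * star u := by rw [hu1]
    _ = u * star u := by rw [hub]
  have heproj : IsProjection (v₀ * star v₀) := by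
    refine ⟨IsSelfAdjoint.mul_star_self v₀, ?_⟩
    show (v₀ * star v₀) * (v₀ * star v₀) = v₀ * star v₀
    calc (v₀ * star v₀) * (v₀ * star v₀) = v₀ * (star v₀ * v₀) * star v₀ := by noncomm_ring
    _ = v₀ * b * star v₀ := by rw [hv1]
    _ = v₀ * star v₀ := by rw [hvb]
  have h1q : IsProjection (1 - q) := aux_proj_compl hq
  -- orthogonality facts
  have hba : b * a = 0 := by
    have := congrArg star hab
    simpa [star_mul, ha.1.star_eq, hb.1.star_eq] using this
  have hqe : q * (v₀ * star v₀) = 0 := by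
    have h1 : (1 - q) * (v₀ * star v₀) = v₀ * star v₀ := aux_le_proj heproj h1q hv2
    have h2 : v₀ * star v₀ - q * (v₀ * star v₀) = (1 - q) * (v₀ * star v₀) := by
      noncomm_ring
    rw [h1] at h2
    exact sub_eq_self.mp h2
  have hfq : (u * star u) * q = u * star u := aux_le_proj' hfproj hq hu2
  have hfe : (u * star u) * (v₀ * star v₀) = 0 := by
    calc (u * star u) * (v₀ * star v₀) = ((u * star u) * q) * (v₀ * star v₀) := by rw [hfq]
    _ = (u * star u) * (q * (v₀ * star v₀)) := by rw [mul_assoc]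
    _ = 0 := by rw [hqe, mul_zero]
  have hva : v₀ * a = 0 := by
    calc v₀ * a = (v₀ * b) * a := by rw [hvb]
    _ = v₀ * (b * a) := by rw [mul_assoc]
    _ = 0 := by rw [hba, mul_zero]
  -- key identity for the candidate `v = v₀ * w`
  have key : (v₀ * w) * star (v₀ * w) = v₀ * star v₀ := by
    rw [star_mul]
    calc v₀ * w * (star w * star v₀) = v₀ * (w * star w) * star v₀ := by noncomm_ring
    _ = v₀ * (a + b) * star v₀ := by rw [hw2]
    _ = v₀ * a * star v₀ + v₀ * b * star v₀ := by noncomm_ring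
    _ = 0 * star v₀ + v₀ * star v₀ := by rw [hva, hvb]
    _ = v₀ * star v₀ := by rw [zero_mul, zero_add]
  refine ⟨v₀ * w, ?_, ?_, ?_⟩
  · -- star v * v ≤ p'
    have key2 : star (v₀ * w) * (v₀ * w) = star w * b * w := by
      rw [star_mul]
      calc star w * star v₀ * (v₀ * w) = star w * (star v₀ * v₀) * w := by noncomm_ring
      _ = star w * b * w := by rw [hv1]
    rw [key2]
    have hble : b ≤ a + b := le_add_of_nonneg_left (aux_proj_nonneg ha)
    have h1 := star_left_conjugate_le_conjugate hble w
    have h2 : star w * (a + b) * w = p' := by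
      calc star w * (a + b) * w = star w * (w * star w) * w := by rw [hw2]
      _ = (star w * w) * (star w * w) := by noncomm_ring
      _ = p' := by rw [hw1]; exact hp'.2.eq
    rwa [h2] at h1
  · -- v * star v ≤ 1 - q
    rw [key]; exact hv2
  · -- p' in the closed ideal generated by q + v v*
    rw [key]
    set c : A := q + v₀ * star v₀ with hc_def
    set S : Set A := {z : A | ∃ x y : A, z = x * c * y} with hS_def
    have hfc : (u * star u) * c = u * star u := by
      rw [hc_def, mul_add, hfq, hfe, add_zero]
    have hec : (v₀ * star v₀) * c = v₀ * star v₀ := by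
      have heq : (v₀ * star v₀) * q = 0 := by
        have := congrArg star hqe
        simpa [star_mul, hq.1.star_eq, heproj.1.star_eq] using this
      rw [hc_def, mul_add, heq, heproj.2.eq, zero_add]
    have hfcf : (u * star u) * c * (u * star u) = u * star u := by
      rw [hfc, hfproj.2.eq]
    have hece : (v₀ * star v₀) * c * (v₀ * star v₀) = v₀ * star v₀ := by
      rw [hec, heproj.2.eq]
    have mem1 : star w * a * w ∈ S := by
      refine ⟨star w * star u * (u * star u), (u * star u) * u * w, ?_⟩
      have hassoc : (star w * star u * (u * star u)) * c * ((u * star u) * u * w)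
          = star w * (star u * (((u * star u) * c * (u * star u)) * (u * w))) := by
        noncomm_ring
      have hha : star u * ((u * star u) * (u * w)) = a * w := by
        calc star u * ((u * star u) * (u * w)) = (star u * u) * (star u * u) * w := by
              noncomm_ring
        _ = a * a * w := by rw [hu1]
        _ = a * w := by rw [ha.2.eq]
      rw [hassoc, hfcf, hha, mul_assoc]
    have mem2 : star w * b * w ∈ S := by
      refine ⟨star w * star v₀ * (v₀ * star v₀), (v₀ * star v₀) * v₀ * w, ?_⟩
      have hassoc : (star w * star v₀ * (v₀ * star v₀)) * c * ((v₀ * star v₀) * v₀ * w)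
          = star w * (star v₀ * (((v₀ * star v₀) * c * (v₀ * star v₀)) * (v₀ * w))) := by
        noncomm_ring
      have hhb : star v₀ * ((v₀ * star v₀) * (v₀ * w)) = b * w := by
        calc star v₀ * ((v₀ * star v₀) * (v₀ * w)) = (star v₀ * v₀) * (star v₀ * v₀) * w := by
              noncomm_ring
        _ = b * b * w := by rw [hv1]
        _ = b * w := by rw [hb.2.eq]
      rw [hassoc, hece, hhb, mul_assoc]
    have hp'sum : p' = star w * a * w + star w * b * w := by
      calc p' = (star w * w) * (star w * w) := by rw [hw1]; exact hp'.2.eq.symm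
      _ = star w * (w * star w) * w := by noncomm_ring
      _ = star w * (a + b) * w := by rw [hw2]
      _ = star w * a * w + star w * b * w := by noncomm_ring
    have hmem : p' ∈ (Submodule.span ℂ S : Set A) := by
      rw [hp'sum]
      exact Submodule.add_mem _ (Submodule.subset_span mem1) (Submodule.subset_span mem2)
    exact subset_closure hmem
end
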